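/- Symmetric erasure mechanism is optimal: Let (X1,X2) ~ DSBS(p) and Y1 = X1 xor Z1 with Z1 ~ Ber(p) independent of X1, with X1 uniform on {0,1}. Consider mechanisms P_{U1|X1} of erasure type with parameters alpha_0, alpha_1 in [0,1]: P(U1=e|X1=0)=alpha_0, P(U1=0|X1=0)=1-alpha_0, P(U1=e|X1=1)=alpha_1, P(U1=1|X1=1)=1-alpha_1, subject to the distortion constraint (alpha_0 + alpha_1)/2 <= D1. Then H(Y1 | U1, X2), as a function of (alpha_0, alpha_1), is concave, symmetric under swapping alpha_0 and alpha_1, and is maximized subject to the constraint at alpha_0 = alpha_1; consequently the same conditional distribution P_{U1|X1} that minimizes the Wyner-Ziv rate I(X1; U1 | X2) also minimizes the leakage I(Y1; U1, X2). -/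

import Mathlib

open scoped BigOperators ENNReal

noncomputable section

/-- A probability mass function on a finite type. -/
def IsPMF {α : Type*} [Fintype α] (p : α → ℝ) : Prop :=
  (∀ a, 0 ≤ p a) ∧ ∑ a, p a = 1

/-- Shannon entropy in bits (logarithm base 2). -/
def Hent2 {α : Type*} [Fintype α] (p : α → ℝ) : ℝ :=
  ∑ a, -(p a * Real.logb 2 (p a))

open Classical in
/-- Distribution (pushforward) of a random variable `f` under a joint pmf `q`. -/
def pushf {Ω α : Type*} [Fintype Ω] (q : Ω → ℝ) (f : Ω → α) : α → ℝ :=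
  fun a => ∑ ω, if f ω = a then q ω else 0

/-- Entropy (in bits) of a random variable `f` under joint pmf `q`. -/
def HRV2 {Ω α : Type*} [Fintype Ω] [Fintype α] (q : Ω → ℝ) (f : Ω → α) : ℝ :=
  Hent2 (pushf q f)

/-- Mutual information `I(f;g)` in bits under joint pmf `q`. -/
def MIrv2 {Ω α β : Type*} [Fintype Ω] [Fintype α] [Fintype β]
    (q : Ω → ℝ) (f : Ω → α) (g : Ω → β) : ℝ :=
  HRV2 q f + HRV2 q g - HRV2 q (fun ω => (f ω, g ω))

/-- Conditional entropy `H(f | g)` in bits under joint pmf `q`. -/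
def condEntRV2 {Ω α β : Type*} [Fintype Ω] [Fintype α] [Fintype β]
    (q : Ω → ℝ) (f : Ω → α) (g : Ω → β) : ℝ :=
  HRV2 q (fun ω => (f ω, g ω)) - HRV2 q g

/-- Conditional mutual information `I(f ; g | h)` in bits under joint pmf `q`. -/
def condMIrv2 {Ω α β γ : Type*} [Fintype Ω] [Fintype α] [Fintype β] [Fintype γ]
    (q : Ω → ℝ) (f : Ω → α) (g : Ω → β) (h : Ω → γ) : ℝ :=
  condEntRV2 q f h + condEntRV2 q g h - condEntRV2 q (fun ω => (f ω, g ω)) h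

/-- Binary entropy function (in bits). -/
def binH (t : ℝ) : ℝ := -(t * Real.logb 2 t) - ((1 - t) * Real.logb 2 (1 - t))

/-- Joint pmf of `(X1, Y1, X2, Y2)` where `(X1,X2) ~ DSBS(p)`, `Y1 = X1 ⊕ Z1`,
`Y2 = X2 ⊕ Z2`, `Z1, Z2 ~ Ber(p)` with `Z1, Z2` independent of `(X1, X2)` and of each
other. Coordinates: `w = (x1, y1, x2, y2)`. -/
def srcDSBS (p : ℝ) : Bool × Bool × Bool × Bool → ℝ :=
  fun w => (if w.1 = w.2.2.1 then (1 - p) / 2 else p / 2) *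
    (if w.2.1 = w.1 then 1 - p else p) *
    (if w.2.2.2 = w.2.2.1 then 1 - p else p)

/-- Erasure distortion on `X1 = Bool`, with reproduction alphabet
`Option Bool` (`none` is the erasure symbol): `0` for correct reproduction, `1` for an
erasure and `∞` for an error. -/
def dErase : Bool → Option Bool → ℝ≥0∞ :=
  fun x xh => match xh with
    | none => 1
    | some b => if b = x then 0 else ∞

/-- The erasure-type mechanism `P_{U1|X1}` with parameters `α₀, α₁`:
`P(U1 = e | X1 = 0) = α₀`, `P(U1 = 0 | X1 = 0) = 1 - α₀`,
`P(U1 = e | X1 = 1) = α₁`, `P(U1 = 1 | X1 = 1) = 1 - α₁` (the erasure symbol `e` is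
`none`). -/
def κErase (a0 a1 : ℝ) : Bool → Option Bool → ℝ :=
  fun x u => match u with
    | none => if x then a1 else a0
    | some b => if b = x then (if x then 1 - a1 else 1 - a0) else 0

/-- Joint pmf of `(X1, Y1, X2, U1)` for `(X1,X2) ~ DSBS(p)`, `Y1 = X1 ⊕ Z1` with
`Z1 ~ Ber(p)` independent of `X1`, and the erasure-type mechanism with parameters
`(α₀, α₁)` applied to `X1`. -/
def jointErase (p a0 a1 : ℝ) : Bool × Bool × Bool × Option Bool → ℝ :=
  fun w => (if w.1 = w.2.2.1 then (1 - p) / 2 else p / 2) *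
    (if w.2.1 = w.1 then 1 - p else p) * κErase a0 a1 w.1 w.2.2.2

/-- `H(Y1 | U1, X2)` under the erasure-type mechanism with parameters `(α₀, α₁)`. -/
def FErase (p a0 a1 : ℝ) : ℝ :=
  condEntRV2 (jointErase p a0 a1) (fun w => w.2.1) (fun w => (w.2.2.2, w.2.2.1))

/-- The Wyner–Ziv rate objective `I(X1; U1 | X2)`. -/
def WZErase (p a0 a1 : ℝ) : ℝ :=
  condMIrv2 (jointErase p a0 a1) (fun w => w.1) (fun w => w.2.2.2) (fun w => w.2.2.1)

/-- The leakage objective `I(Y1; U1, X2)`. -/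
def LeakErase (p a0 a1 : ℝ) : ℝ :=
  MIrv2 (jointErase p a0 a1) (fun w => w.2.1) (fun w => (w.2.2.2, w.2.2.1))

/-! ### Auxiliary lemmas -/

section Aux

/-- The key two-argument function `glog u v = -(u log₂ u) + u log₂ v`. -/
def glog (u v : ℝ) : ℝ := u * Real.logb 2 v - u * Real.logb 2 u

lemma glog_zero (v : ℝ) : glog 0 v = 0 := by simp [glog]

lemma logsum2_log (u1 u2 v1 v2 : ℝ) (h1 : 0 < u1) (h2 : 0 < u2)
    (hv1 : 0 < v1) (hv2 : 0 < v2) :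
    (u1 + u2) * Real.log ((u1 + u2) / (v1 + v2)) ≤
      u1 * Real.log (u1 / v1) + u2 * Real.log (u2 / v2) := by
  have hU : (0:ℝ) < u1 + u2 := by linarith
  have hV : (0:ℝ) < v1 + v2 := by linarith
  have key1 : Real.log (v1 * (u1 + u2) / (u1 * (v1 + v2))) ≤
      v1 * (u1 + u2) / (u1 * (v1 + v2)) - 1 :=
    Real.log_le_sub_one_of_pos (by positivity)
  have key2 : Real.log (v2 * (u1 + u2) / (u2 * (v1 + v2))) ≤
      v2 * (u1 + u2) / (u2 * (v1 + v2)) - 1 :=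
    Real.log_le_sub_one_of_pos (by positivity)
  have e1 : Real.log (v1 * (u1 + u2) / (u1 * (v1 + v2))) =
      Real.log ((u1 + u2) / (v1 + v2)) - Real.log (u1 / v1) := by
    rw [Real.log_div (by positivity) (by positivity), Real.log_div (by positivity) (by positivity),
      Real.log_div (by positivity) (by positivity), Real.log_mul (by positivity) (by positivity),
      Real.log_mul (by positivity) (by positivity)]
    ring
  have e2 : Real.log (v2 * (u1 + u2) / (u2 * (v1 + v2))) =
      Real.log ((u1 + u2) / (v1 + v2)) - Real.log (u2 / v2) := by
    rw [Real.log_div (by positivity) (by positivity), Real.log_div (by positivity) (by positivity),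
      Real.log_div (by positivity) (by positivity), Real.log_mul (by positivity) (by positivity),
      Real.log_mul (by positivity) (by positivity)]
    ring
  have m1 : u1 * Real.log (v1 * (u1 + u2) / (u1 * (v1 + v2))) ≤
      u1 * (v1 * (u1 + u2) / (u1 * (v1 + v2)) - 1) :=
    mul_le_mul_of_nonneg_left key1 h1.le
  have m2 : u2 * Real.log (v2 * (u1 + u2) / (u2 * (v1 + v2))) ≤
      u2 * (v2 * (u1 + u2) / (u2 * (v1 + v2)) - 1) :=
    mul_le_mul_of_nonneg_left key2 h2.le
  have rhs : u1 * (v1 * (u1 + u2) / (u1 * (v1 + v2)) - 1) +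
      u2 * (v2 * (u1 + u2) / (u2 * (v1 + v2)) - 1) = 0 := by
    field_simp
    ring
  rw [e1] at m1; rw [e2] at m2
  nlinarith [m1, m2]

lemma glog_eq (u v : ℝ) : glog u v = (u * Real.log v - u * Real.log u) / Real.log 2 := by
  simp [glog, Real.logb]; ring

lemma logsum2 {u1 u2 v1 v2 : ℝ} (h1 : 0 ≤ u1) (h1v : u1 ≤ v1) (h2 : 0 ≤ u2) (h2v : u2 ≤ v2) :
    glog u1 v1 + glog u2 v2 ≤ glog (u1 + u2) (v1 + v2) := by
  rcases eq_or_lt_of_le (h1.trans h1v) with hv1 | hv1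
  · have hu1 : u1 = 0 := le_antisymm (h1v.trans hv1.symm.le) h1
    have hv1' : v1 = 0 := hv1.symm
    simp [hu1, hv1', glog_zero]
  rcases eq_or_lt_of_le (h2.trans h2v) with hv2 | hv2
  · have hu2 : u2 = 0 := le_antisymm (h2v.trans hv2.symm.le) h2
    have hv2' : v2 = 0 := hv2.symm
    simp [hu2, hv2', glog_zero]
  have hV : (0:ℝ) < v1 + v2 := by linarith
  rcases eq_or_lt_of_le h1 with hu1 | hu1
  · rw [← hu1, glog_zero, zero_add, zero_add]
    rcases eq_or_lt_of_le h2 with hu2 | hu2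
    · rw [← hu2, glog_zero, glog_zero]
    · unfold glog
      have : Real.logb 2 v2 ≤ Real.logb 2 (v1 + v2) :=
        Real.logb_le_logb_of_le (by norm_num) hv2 (by linarith)
      nlinarith [this]
  rcases eq_or_lt_of_le h2 with hu2 | hu2
  · rw [← hu2, glog_zero, add_zero, add_zero]
    unfold glog
    have : Real.logb 2 v1 ≤ Real.logb 2 (v1 + v2) :=
      Real.logb_le_logb_of_le (by norm_num) hv1 (by linarith)
    nlinarith [this]
  have hU : (0:ℝ) < u1 + u2 := by linarith
  rw [glog_eq, glog_eq, glog_eq, ← add_div, div_le_div_iff_of_pos_right]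
  · have key := logsum2_log u1 u2 v1 v2 hu1 hu2 hv1 hv2
    rw [Real.log_div (ne_of_gt hU) (ne_of_gt hV), Real.log_div (ne_of_gt hu1) (ne_of_gt hv1),
      Real.log_div (ne_of_gt hu2) (ne_of_gt hv2)] at key
    nlinarith [key]
  · exact Real.log_pos (by norm_num)

lemma glog_smul {t u v : ℝ} (ht : 0 ≤ t) (hu : 0 ≤ u) (huv : u ≤ v) :
    glog (t * u) (t * v) = t * glog u v := by
  rcases eq_or_lt_of_le ht with ht0 | ht0
  · simp [← ht0, glog_zero]
  rcases eq_or_lt_of_le hu with hu0 | hu0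
  · simp [← hu0, glog_zero]
  have hv : 0 < v := lt_of_lt_of_le hu0 huv
  rw [glog_eq, glog_eq, Real.log_mul (ne_of_gt ht0) (ne_of_gt hv),
    Real.log_mul (ne_of_gt ht0) (ne_of_gt hu0)]
  field_simp
  ring

open Finset in
lemma logsumN {ι : Type*} [DecidableEq ι] (s : Finset ι) (u v : ι → ℝ)
    (h : ∀ i ∈ s, 0 ≤ u i ∧ u i ≤ v i) :
    ∑ i ∈ s, glog (u i) (v i) ≤ glog (∑ i ∈ s, u i) (∑ i ∈ s, v i) := by
  induction s using Finset.induction_on with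
  | empty => simp [glog_zero]
  | @insert a s ha ih =>
    rw [Finset.sum_insert ha, Finset.sum_insert ha, Finset.sum_insert ha]
    have h1 := h a (Finset.mem_insert_self a s)
    have hs : ∀ i ∈ s, 0 ≤ u i ∧ u i ≤ v i := fun i hi => h i (Finset.mem_insert_of_mem hi)
    calc glog (u a) (v a) + ∑ i ∈ s, glog (u i) (v i)
        ≤ glog (u a) (v a) + glog (∑ i ∈ s, u i) (∑ i ∈ s, v i) := by linarith [ih hs]
      _ ≤ glog (u a + ∑ i ∈ s, u i) (v a + ∑ i ∈ s, v i) := by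
          apply logsum2 h1.1 h1.2 (Finset.sum_nonneg fun i hi => (hs i hi).1)
          exact Finset.sum_le_sum fun i hi => (hs i hi).2

end Aux
set_option linter.unusedSectionVars false
section Push

variable {Ω α β γ : Type*} [Fintype Ω] [Fintype α] [Fintype β] [Fintype γ]

lemma pushf_nonneg (q : Ω → ℝ) (hq : ∀ ω, 0 ≤ q ω) (f : Ω → α) (a : α) :
    0 ≤ pushf q f a := by
  classical
  refine Finset.sum_nonneg fun ω _ => ?_
  by_cases h : f ω = a <;> simp [h, hq ω]

open Classical in
lemma pushf_snd_marg (q : Ω → ℝ) (f : Ω → α) (g : Ω → β) (b : β) :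
    pushf q g b = ∑ a, pushf q (fun ω => (f ω, g ω)) (a, b) := by
  unfold pushf
  rw [Finset.sum_comm]
  refine Finset.sum_congr rfl fun ω _ => ?_
  by_cases h : g ω = b
  · simp only [Prod.mk.injEq, h, and_true]
    rw [Finset.sum_ite_eq Finset.univ (f ω) (fun _ => q ω)]
    simp [h]
  · simp [Prod.mk.injEq, h]

lemma pushf_le_marg (q : Ω → ℝ) (hq : ∀ ω, 0 ≤ q ω) (f : Ω → α) (g : Ω → β) (a : α) (b : β) :
    pushf q (fun ω => (f ω, g ω)) (a, b) ≤ pushf q g b := by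
  classical
  rw [pushf_snd_marg q f g b]
  exact Finset.single_le_sum (fun a' _ => pushf_nonneg q hq (fun ω => (f ω, g ω)) (a', b)) (Finset.mem_univ a)

/-- Conditional entropy as a sum of `glog` values. -/
lemma condEnt_eq_sum (q : Ω → ℝ) (f : Ω → α) (g : Ω → β) :
    condEntRV2 q f g =
      ∑ b, ∑ a, glog (pushf q (fun ω => (f ω, g ω)) (a, b)) (pushf q g b) := by
  classical
  unfold condEntRV2 HRV2 Hent2 glog
  rw [Fintype.sum_prod_type]
  rw [Finset.sum_comm]
  rw [← Finset.sum_sub_distrib]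
  refine Finset.sum_congr rfl fun b _ => ?_
  rw [pushf_snd_marg q f g b, Finset.sum_mul, ← Finset.sum_neg_distrib, ← Finset.sum_sub_distrib]
  refine Finset.sum_congr rfl fun a _ => ?_
  ring

/-- Concavity of conditional entropy in the joint pmf. -/
lemma condEnt_concave (q1 q2 : Ω → ℝ) (hq1 : ∀ ω, 0 ≤ q1 ω) (hq2 : ∀ ω, 0 ≤ q2 ω)
    (t : ℝ) (ht0 : 0 ≤ t) (ht1 : t ≤ 1) (f : Ω → α) (g : Ω → β) :
    t * condEntRV2 q1 f g + (1 - t) * condEntRV2 q2 f g ≤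
      condEntRV2 (fun ω => t * q1 ω + (1 - t) * q2 ω) f g := by
  classical
  have hpushA : ∀ (c : α × β),
      pushf (fun ω => t * q1 ω + (1 - t) * q2 ω) (fun ω => (f ω, g ω)) c =
        t * pushf q1 (fun ω => (f ω, g ω)) c + (1 - t) * pushf q2 (fun ω => (f ω, g ω)) c := by
    intro c
    unfold pushf
    rw [Finset.mul_sum, Finset.mul_sum, ← Finset.sum_add_distrib]
    refine Finset.sum_congr rfl fun ω _ => ?_
    by_cases hc : (f ω, g ω) = c <;> simp [hc]
  have hpushB : ∀ (c : β),
      pushf (fun ω => t * q1 ω + (1 - t) * q2 ω) g c =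
        t * pushf q1 g c + (1 - t) * pushf q2 g c := by
    intro c
    unfold pushf
    rw [Finset.mul_sum, Finset.mul_sum, ← Finset.sum_add_distrib]
    refine Finset.sum_congr rfl fun ω _ => ?_
    by_cases hc : g ω = c <;> simp [hc]
  rw [condEnt_eq_sum, condEnt_eq_sum, condEnt_eq_sum]
  rw [Finset.mul_sum, Finset.mul_sum, ← Finset.sum_add_distrib]
  refine Finset.sum_le_sum fun b _ => ?_
  rw [Finset.mul_sum, Finset.mul_sum, ← Finset.sum_add_distrib]
  refine Finset.sum_le_sum fun a _ => ?_
  rw [hpushA, hpushB]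
  have e1 : t * glog (pushf q1 (fun ω => (f ω, g ω)) (a, b)) (pushf q1 g b) =
      glog (t * pushf q1 (fun ω => (f ω, g ω)) (a, b)) (t * pushf q1 g b) :=
    (glog_smul ht0 (pushf_nonneg q1 hq1 _ _) (pushf_le_marg q1 hq1 f g a b)).symm
  have e2 : (1 - t) * glog (pushf q2 (fun ω => (f ω, g ω)) (a, b)) (pushf q2 g b) =
      glog ((1 - t) * pushf q2 (fun ω => (f ω, g ω)) (a, b)) ((1 - t) * pushf q2 g b) :=
    (glog_smul (by linarith) (pushf_nonneg q2 hq2 _ _) (pushf_le_marg q2 hq2 f g a b)).symm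
  rw [e1, e2]
  exact logsum2 (mul_nonneg ht0 (pushf_nonneg q1 hq1 _ (a, b)))
    (mul_le_mul_of_nonneg_left (pushf_le_marg q1 hq1 f g a b) ht0)
    (mul_nonneg (by linarith) (pushf_nonneg q2 hq2 _ (a, b)))
    (mul_le_mul_of_nonneg_left (pushf_le_marg q2 hq2 f g a b) (by linarith))

end Push
section Cond

set_option linter.unusedSectionVars false

variable {Ω Ω' α β γ α' β' : Type*} [Fintype Ω] [Fintype Ω'] [Fintype α] [Fintype β]
  [Fintype γ] [Fintype α'] [Fintype β']

open Classical in
lemma pushf_pair_marg (q : Ω → ℝ) (f : Ω → α) (g : Ω → β) (h : Ω → γ) (a : α) (c : γ) :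
    pushf q (fun ω => (f ω, h ω)) (a, c) =
      ∑ b, pushf q (fun ω => (f ω, (g ω, h ω))) (a, (b, c)) := by
  unfold pushf
  rw [Finset.sum_comm]
  refine Finset.sum_congr rfl fun ω _ => ?_
  by_cases hf : f ω = a
  · by_cases hh : h ω = c
    · simp only [Prod.mk.injEq, hf, hh, true_and, and_true]
      rw [Finset.sum_ite_eq Finset.univ (g ω) (fun _ => q ω)]
      simp [hf, hh]
    · simp [Prod.mk.injEq, hf, hh]
  · simp [Prod.mk.injEq, hf]

/-- Conditioning on an extra variable reduces conditional entropy. -/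
lemma condEnt_pair_le (q : Ω → ℝ) (hq : ∀ ω, 0 ≤ q ω) (f : Ω → α) (g : Ω → β) (h : Ω → γ) :
    condEntRV2 q f (fun ω => (g ω, h ω)) ≤ condEntRV2 q f h := by
  classical
  rw [condEnt_eq_sum, condEnt_eq_sum]
  rw [Fintype.sum_prod_type, Finset.sum_comm]
  refine Finset.sum_le_sum fun c _ => ?_
  rw [Finset.sum_comm]
  refine Finset.sum_le_sum fun a _ => ?_
  have hm1 : pushf q (fun ω => (f ω, h ω)) (a, c) =
      ∑ b, pushf q (fun ω => (f ω, (g ω, h ω))) (a, (b, c)) :=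
    pushf_pair_marg q f g h a c
  have hm2 : pushf q h c = ∑ b, pushf q (fun ω => (g ω, h ω)) (b, c) :=
    pushf_snd_marg q g h c
  rw [hm1, hm2]
  refine logsumN Finset.univ _ _ fun b _ => ⟨pushf_nonneg q hq _ _, ?_⟩
  have := pushf_le_marg q hq f (fun ω => (g ω, h ω)) a (b, c)
  -- P(a,(b,c)) ≤ P_{(g,h)}(b,c)
  calc pushf q (fun ω => (f ω, (g ω, h ω))) (a, (b, c))
      ≤ pushf q (fun ω => (g ω, h ω)) (b, c) := this
    _ = _ := rfl

lemma pushf_domEquiv (q : Ω → ℝ) (σ : Ω' ≃ Ω) (f : Ω → α) :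
    pushf (fun ω' => q (σ ω')) (fun ω' => f (σ ω')) = pushf q f := by
  classical
  funext a
  unfold pushf
  exact Equiv.sum_comp σ (fun ω => if f ω = a then q ω else 0)

lemma HRV2_domEquiv (q : Ω → ℝ) (σ : Ω' ≃ Ω) (f : Ω → α) :
    HRV2 (fun ω' => q (σ ω')) (fun ω' => f (σ ω')) = HRV2 q f := by
  unfold HRV2
  rw [pushf_domEquiv]

lemma HRV2_codEquiv (q : Ω → ℝ) (f : Ω → α) (e : α ≃ β) :
    HRV2 q (fun ω => e (f ω)) = HRV2 q f := by
  classical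
  unfold HRV2 Hent2
  have hp : ∀ b, pushf q (fun ω => e (f ω)) b = pushf q f (e.symm b) := by
    intro b
    unfold pushf
    refine Finset.sum_congr rfl fun ω _ => ?_
    simp only [Equiv.apply_eq_iff_eq_symm_apply]
  calc ∑ b, -(pushf q (fun ω => e (f ω)) b * Real.logb 2 (pushf q (fun ω => e (f ω)) b))
      = ∑ b, -(pushf q f (e.symm b) * Real.logb 2 (pushf q f (e.symm b))) := by
        refine Finset.sum_congr rfl fun b _ => by rw [hp]
    _ = ∑ a, -(pushf q f a * Real.logb 2 (pushf q f a)) :=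
        Equiv.sum_comp e.symm (fun a => -(pushf q f a * Real.logb 2 (pushf q f a)))

/-- If a coordinate is a.s. equal to `u0`, it can be dropped from a pair. -/
lemma HRV2_det_pair (q : Ω → ℝ) (g : Ω → β) (h : Ω → γ) (u0 : β)
    (hdet : ∀ ω, g ω ≠ u0 → q ω = 0) :
    HRV2 q (fun ω => (g ω, h ω)) = HRV2 q h := by
  classical
  unfold HRV2 Hent2
  have hp : ∀ b c, pushf q (fun ω => (g ω, h ω)) (b, c) =
      if b = u0 then pushf q h c else 0 := by
    intro b c
    unfold pushf
    by_cases hb : b = u0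
    · rw [if_pos hb]
      refine Finset.sum_congr rfl fun ω _ => ?_
      by_cases hq0 : q ω = 0
      · simp [hq0]
      · have hg : g ω = u0 := by by_contra hg; exact hq0 (hdet ω hg)
        simp [Prod.mk.injEq, hg, hb]
    · rw [if_neg hb]
      refine Finset.sum_eq_zero fun ω _ => ?_
      by_cases hq0 : q ω = 0
      · simp [hq0]
      · have hg : g ω = u0 := by by_contra hg; exact hq0 (hdet ω hg)
        have : ((g ω, h ω) = (b, c)) = False := by
          simp only [Prod.mk.injEq, hg, eq_false_intro (fun hx : u0 = b => hb hx.symm)]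
          simp
        rw [this]
        simp
  rw [Fintype.sum_prod_type]
  have : ∀ b, (∑ c, -(pushf q (fun ω => (g ω, h ω)) (b, c) *
      Real.logb 2 (pushf q (fun ω => (g ω, h ω)) (b, c)))) =
      if b = u0 then ∑ c, -(pushf q h c * Real.logb 2 (pushf q h c)) else 0 := by
    intro b
    by_cases hb : b = u0
    · subst hb
      simp only [if_pos rfl]
      exact Finset.sum_congr rfl fun c _ => by rw [hp]; simp
    · rw [if_neg hb]
      refine Finset.sum_eq_zero fun c _ => by rw [hp, if_neg hb]; simp
  rw [Finset.sum_congr rfl fun b _ => this b]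
  rw [Finset.sum_ite_eq' Finset.univ u0
    (fun _ => ∑ c, -(pushf q h c * Real.logb 2 (pushf q h c)))]
  simp

end Cond
section Model

set_option linter.unusedSectionVars false

/-- Sample space of `(X1, Y1, X2, U1)`. -/
abbrev ΩE := Bool × Bool × Bool × Option Bool

/-- Global bit-flip on the sample space. -/
def negW : ΩE → ΩE := fun w => (!w.1, !w.2.1, !w.2.2.1, Option.map not w.2.2.2)

lemma negW_invol : Function.Involutive negW := by
  intro w
  rcases w with ⟨x1, y1, x2, u⟩
  cases u <;> simp [negW]

def negE : Equiv.Perm ΩE := Function.Involutive.toPerm negW negW_invol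

def bnot : Bool ≃ Bool := Function.Involutive.toPerm not Bool.not_not

lemma jointErase_swap (p a0 a1 : ℝ) :
    jointErase p a1 a0 = fun w => jointErase p a0 a1 (negE w) := by
  funext w
  rcases w with ⟨x1, y1, x2, u⟩
  have : negE (x1, y1, x2, u) = negW (x1, y1, x2, u) := rfl
  rw [this]
  cases u with
  | none => cases x1 <;> cases y1 <;> cases x2 <;> simp [jointErase, κErase, negW]
  | some b => cases b <;> cases x1 <;> cases y1 <;> cases x2 <;>
      simp [jointErase, κErase, negW]

variable {Ω Ω' α β α' β' : Type*} [Fintype Ω] [Fintype Ω'] [Fintype α] [Fintype β]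
  [Fintype α'] [Fintype β']

lemma HRV2_domEquiv' (q : Ω → ℝ) (σ : Ω' ≃ Ω) (h : Ω' → α) :
    HRV2 (fun ω' => q (σ ω')) h = HRV2 q (fun ω => h (σ.symm ω)) := by
  have := HRV2_domEquiv q σ (fun ω => h (σ.symm ω))
  simpa using this

lemma condEnt_domEquiv' (q : Ω → ℝ) (σ : Ω' ≃ Ω) (f : Ω' → α) (g : Ω' → β) :
    condEntRV2 (fun ω' => q (σ ω')) f g =
      condEntRV2 q (fun ω => f (σ.symm ω)) (fun ω => g (σ.symm ω)) := by
  unfold condEntRV2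
  rw [HRV2_domEquiv' q σ (fun ω' => (f ω', g ω')), HRV2_domEquiv' q σ g]

lemma HRV2_codEquiv' (q : Ω → ℝ) (f : Ω → α) (f' : Ω → β) (e : α ≃ β)
    (hf : ∀ ω, f' ω = e (f ω)) : HRV2 q f' = HRV2 q f := by
  have : f' = fun ω => e (f ω) := funext hf
  rw [this]
  exact HRV2_codEquiv q f e

lemma condEnt_codEquiv' (q : Ω → ℝ) (f : Ω → α) (g : Ω → β) (f' : Ω → α') (g' : Ω → β')
    (e1 : α ≃ α') (e2 : β ≃ β') (hf : ∀ ω, f' ω = e1 (f ω)) (hg : ∀ ω, g' ω = e2 (g ω)) :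
    condEntRV2 q f' g' = condEntRV2 q f g := by
  unfold condEntRV2
  rw [HRV2_codEquiv' q g g' e2 hg,
    HRV2_codEquiv' q (fun ω => (f ω, g ω)) (fun ω => (f' ω, g' ω)) (e1.prodCongr e2)
      (fun ω => by simp [hf ω, hg ω])]

/-- Generic swap-symmetry for conditional entropies of a negation-equivariant bit. -/
lemma condEnt_swap_gen (p a0 a1 : ℝ) (f : ΩE → Bool) (hf : ∀ w, f (negW w) = !(f w)) :
    condEntRV2 (jointErase p a1 a0) f (fun w => (w.2.2.2, w.2.2.1)) =
      condEntRV2 (jointErase p a0 a1) f (fun w => (w.2.2.2, w.2.2.1)) := by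
  rw [jointErase_swap p a0 a1]
  rw [condEnt_domEquiv' (jointErase p a0 a1) negE f (fun w => (w.2.2.2, w.2.2.1))]
  have hsymm : ∀ w : ΩE, negE.symm w = negW w := fun w => rfl
  refine condEnt_codEquiv' (jointErase p a0 a1) f (fun w => (w.2.2.2, w.2.2.1))
    (fun ω => f (negE.symm ω)) (fun ω => ((negE.symm ω).2.2.2, (negE.symm ω).2.2.1))
    bnot ((Equiv.optionCongr bnot).prodCongr bnot) ?_ ?_
  · intro ω
    show f (negE.symm ω) = bnot (f ω)
    rw [hsymm, hf]
    rfl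
  · intro ω
    show ((negE.symm ω).2.2.2, (negE.symm ω).2.2.1) =
      (bnot.optionCongr.prodCongr bnot) (ω.2.2.2, ω.2.2.1)
    rw [hsymm]
    rcases ω with ⟨x1, y1, x2, u⟩
    cases u <;> simp [negW, bnot, Equiv.optionCongr, Function.Involutive.toPerm]

lemma FErase_swap (p a0 a1 : ℝ) : FErase p a1 a0 = FErase p a0 a1 :=
  condEnt_swap_gen p a0 a1 (fun w => w.2.1) (fun w => rfl)

/-- `H(X1 | U1, X2)`, the quantity controlling the Wyner–Ziv rate. -/
def GEnt (p a0 a1 : ℝ) : ℝ :=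
  condEntRV2 (jointErase p a0 a1) (fun w => w.1) (fun w => (w.2.2.2, w.2.2.1))

lemma GEnt_swap (p a0 a1 : ℝ) : GEnt p a1 a0 = GEnt p a0 a1 :=
  condEnt_swap_gen p a0 a1 (fun w => w.1) (fun w => rfl)

end Model
section Model2

set_option linter.unusedSectionVars false
set_option linter.unusedVariables false

lemma κErase_nonneg {a0 a1 : ℝ} (h0 : 0 ≤ a0) (h0' : a0 ≤ 1) (h1 : 0 ≤ a1) (h1' : a1 ≤ 1)
    (x : Bool) (u : Option Bool) : 0 ≤ κErase a0 a1 x u := by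
  cases u <;> cases x <;> simp [κErase] <;> first | linarith | (split_ifs <;> linarith)

lemma jointErase_nonneg {p a0 a1 : ℝ} (hp0 : 0 < p) (hp1 : p < 1)
    (h0 : 0 ≤ a0) (h0' : a0 ≤ 1) (h1 : 0 ≤ a1) (h1' : a1 ≤ 1) :
    ∀ w, 0 ≤ jointErase p a0 a1 w := by
  intro w
  unfold jointErase
  refine mul_nonneg (mul_nonneg ?_ ?_) (κErase_nonneg h0 h0' h1 h1' _ _)
  · split_ifs <;> [linarith; linarith]
  · split_ifs <;> linarith

lemma jointErase_affine (p a0 a1 b0 b1 t : ℝ) :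
    jointErase p (t * a0 + (1 - t) * b0) (t * a1 + (1 - t) * b1) =
      fun w => t * jointErase p a0 a1 w + (1 - t) * jointErase p b0 b1 w := by
  funext w
  rcases w with ⟨x1, y1, x2, u⟩
  cases u with
  | none => cases x1 <;> cases y1 <;> cases x2 <;> simp [jointErase, κErase] <;> ring
  | some b => cases b <;> cases x1 <;> cases y1 <;> cases x2 <;> simp [jointErase, κErase] <;> ring

/-- Concavity of `condEnt f (U1,X2)` along the erasure-parameter square. -/
lemma condEnt_param_concave (p : ℝ) (hp0 : 0 < p) (hp1 : p < 1) {α : Type*} [Fintype α]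
    (f : ΩE → α) (a0 a1 b0 b1 t : ℝ)
    (ha0 : 0 ≤ a0) (ha0' : a0 ≤ 1) (ha1 : 0 ≤ a1) (ha1' : a1 ≤ 1)
    (hb0 : 0 ≤ b0) (hb0' : b0 ≤ 1) (hb1 : 0 ≤ b1) (hb1' : b1 ≤ 1)
    (ht0 : 0 ≤ t) (ht1 : t ≤ 1) :
    t * condEntRV2 (jointErase p a0 a1) f (fun w => (w.2.2.2, w.2.2.1)) +
      (1 - t) * condEntRV2 (jointErase p b0 b1) f (fun w => (w.2.2.2, w.2.2.1)) ≤
    condEntRV2 (jointErase p (t * a0 + (1 - t) * b0) (t * a1 + (1 - t) * b1)) f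
      (fun w => (w.2.2.2, w.2.2.1)) := by
  rw [jointErase_affine]
  exact condEnt_concave (jointErase p a0 a1) (jointErase p b0 b1)
    (jointErase_nonneg hp0 hp1 ha0 ha0' ha1 ha1') (jointErase_nonneg hp0 hp1 hb0 hb0' hb1 hb1')
    t ht0 ht1 f _

/-- parameter-independence of the marginal of `X2`. -/
lemma pushf_X2_indep (p a0 a1 b0 b1 : ℝ) :
    pushf (jointErase p a0 a1) (fun w => w.2.2.1) =
      pushf (jointErase p b0 b1) (fun w => w.2.2.1) := by
  funext z
  simp only [pushf, Fintype.sum_prod_type, Fintype.sum_bool, Fintype.sum_option,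
    jointErase, κErase]
  cases z <;> norm_num <;> ring

/-- parameter-independence of the joint marginal of `(f, X2)` for a bit `f` not
depending on `U1` (stated for the two cases we need). -/
lemma pushf_Y1X2_indep (p a0 a1 b0 b1 : ℝ) :
    pushf (jointErase p a0 a1) (fun w => (w.2.1, w.2.2.1)) =
      pushf (jointErase p b0 b1) (fun w => (w.2.1, w.2.2.1)) := by
  funext z
  rcases z with ⟨y, x⟩
  simp only [pushf, Fintype.sum_prod_type, Fintype.sum_bool, Fintype.sum_option,
    jointErase, κErase, Prod.mk.injEq]
  cases y <;> cases x <;> norm_num <;> ring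

lemma pushf_X1X2_indep (p a0 a1 b0 b1 : ℝ) :
    pushf (jointErase p a0 a1) (fun w => (w.1, w.2.2.1)) =
      pushf (jointErase p b0 b1) (fun w => (w.1, w.2.2.1)) := by
  funext z
  rcases z with ⟨y, x⟩
  simp only [pushf, Fintype.sum_prod_type, Fintype.sum_bool, Fintype.sum_option,
    jointErase, κErase, Prod.mk.injEq]
  cases y <;> cases x <;> norm_num <;> ring

lemma pushf_Y1_indep (p a0 a1 b0 b1 : ℝ) :
    pushf (jointErase p a0 a1) (fun w => w.2.1) =
      pushf (jointErase p b0 b1) (fun w => w.2.1) := by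
  funext z
  simp only [pushf, Fintype.sum_prod_type, Fintype.sum_bool, Fintype.sum_option,
    jointErase, κErase]
  cases z <;> norm_num <;> ring

lemma HRV2_Y1_indep (p a0 a1 b0 b1 : ℝ) :
    HRV2 (jointErase p a0 a1) (fun w => w.2.1) =
      HRV2 (jointErase p b0 b1) (fun w => w.2.1) := by
  unfold HRV2
  rw [pushf_Y1_indep p a0 a1 b0 b1]

lemma condEnt_Y1X2_indep (p a0 a1 b0 b1 : ℝ) :
    condEntRV2 (jointErase p a0 a1) (fun w => w.2.1) (fun w => w.2.2.1) =
      condEntRV2 (jointErase p b0 b1) (fun w => w.2.1) (fun w => w.2.2.1) := by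
  unfold condEntRV2 HRV2
  rw [pushf_Y1X2_indep p a0 a1 b0 b1, pushf_X2_indep p a0 a1 b0 b1]

lemma condEnt_X1X2_indep (p a0 a1 b0 b1 : ℝ) :
    condEntRV2 (jointErase p a0 a1) (fun w => w.1) (fun w => w.2.2.1) =
      condEntRV2 (jointErase p b0 b1) (fun w => w.1) (fun w => w.2.2.1) := by
  unfold condEntRV2 HRV2
  rw [pushf_X1X2_indep p a0 a1 b0 b1, pushf_X2_indep p a0 a1 b0 b1]

end Model2
section Model3

set_option linter.unusedSectionVars false
set_option linter.unusedVariables false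

lemma jointErase_det (p : ℝ) : ∀ w : ΩE, w.2.2.2 ≠ none → jointErase p 1 1 w = 0 := by
  intro w h
  rcases w with ⟨x1, y1, x2, u⟩
  cases u with
  | none => exact absurd rfl h
  | some b => cases b <;> cases x1 <;> simp [jointErase, κErase]

/-- The equiv `α × (β × γ) ≃ β × (α × γ)`. -/
def swapMid (α β γ : Type*) : α × (β × γ) ≃ β × (α × γ) where
  toFun x := (x.2.1, (x.1, x.2.2))
  invFun y := (y.2.1, (y.1, y.2.2))
  left_inv := fun ⟨a, b, c⟩ => rfl
  right_inv := fun ⟨a, b, c⟩ => rfl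

/-- When `U1` is a.s. the erasure symbol, conditioning on `(U1, X2)` is the same as
conditioning on `X2`. -/
lemma condEnt_det_param (q : ΩE → ℝ) (hdet : ∀ w : ΩE, w.2.2.2 ≠ none → q w = 0)
    (f : ΩE → Bool) :
    condEntRV2 q f (fun w => (w.2.2.2, w.2.2.1)) = condEntRV2 q f (fun w => w.2.2.1) := by
  unfold condEntRV2
  have h1 : HRV2 q (fun w => (f w, (w.2.2.2, w.2.2.1))) =
      HRV2 q (fun w => (w.2.2.2, (f w, w.2.2.1))) :=
    (HRV2_codEquiv' q (fun w => (f w, (w.2.2.2, w.2.2.1)))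
      (fun w => (w.2.2.2, (f w, w.2.2.1))) (swapMid Bool (Option Bool) Bool)
      (fun ω => rfl)).symm
  rw [h1]
  rw [HRV2_det_pair q (fun w => w.2.2.2) (fun w => (f w, w.2.2.1)) none hdet]
  rw [HRV2_det_pair q (fun w => w.2.2.2) (fun w => w.2.2.1) none hdet]

/-- Monotonicity on the diagonal, generic in the first variable. -/
lemma condEnt_diag_mono (p : ℝ) (hp0 : 0 < p) (hp1 : p < 1) (f : ΩE → Bool)
    (hindep : ∀ a0 a1 b0 b1 : ℝ,
      condEntRV2 (jointErase p a0 a1) f (fun w => w.2.2.1) =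
        condEntRV2 (jointErase p b0 b1) f (fun w => w.2.2.1))
    (m a : ℝ) (hm0 : 0 ≤ m) (hma : m ≤ a) (ha1 : a ≤ 1) :
    condEntRV2 (jointErase p m m) f (fun w => (w.2.2.2, w.2.2.1)) ≤
      condEntRV2 (jointErase p a a) f (fun w => (w.2.2.2, w.2.2.1)) := by
  rcases eq_or_lt_of_le (hma.trans ha1) with hm1 | hm1
  · have hm1' : m = 1 := hm1
    have ha' : a = 1 := le_antisymm ha1 (hm1' ▸ hma)
    rw [hm1', ha']
  · -- m < 1
    set s : ℝ := (1 - a) / (1 - m) with hs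
    have hs0 : 0 ≤ s := by
      apply div_nonneg <;> linarith
    have hs1 : s ≤ 1 := by
      rw [div_le_one (by linarith)]
      linarith
    have hcomb : a = s * m + (1 - s) * 1 := by
      have h1m : (1 - m) ≠ 0 := by linarith
      field_simp [hs]
      have h2 : s * (1 - m) = 1 - a := by rw [hs]; exact div_mul_cancel₀ _ h1m
      linear_combination h2
    have key := condEnt_param_concave p hp0 hp1 f m m 1 1 s
      hm0 (by linarith) hm0 (by linarith) (by norm_num) (by norm_num) (by norm_num)
      (by norm_num) hs0 hs1
    rw [← hcomb] at key
    -- condEnt at (1,1) dominates condEnt at (m,m)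
    have h11 : condEntRV2 (jointErase p m m) f (fun w => (w.2.2.2, w.2.2.1)) ≤
        condEntRV2 (jointErase p 1 1) f (fun w => (w.2.2.2, w.2.2.1)) := by
      rw [condEnt_det_param (jointErase p 1 1) (jointErase_det p) f]
      rw [hindep 1 1 m m]
      exact condEnt_pair_le (jointErase p m m)
        (jointErase_nonneg hp0 hp1 hm0 (by linarith) hm0 (by linarith)) f _ _
    nlinarith [key, h11]

end Model3
section Final

set_option linter.unusedSectionVars false
set_option linter.unusedVariables false

lemma FErase_concave (p : ℝ) (hp0 : 0 < p) (hp1 : p < 1) (a0 a1 b0 b1 t : ℝ)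
    (ha0 : 0 ≤ a0) (ha0' : a0 ≤ 1) (ha1 : 0 ≤ a1) (ha1' : a1 ≤ 1)
    (hb0 : 0 ≤ b0) (hb0' : b0 ≤ 1) (hb1 : 0 ≤ b1) (hb1' : b1 ≤ 1)
    (ht0 : 0 ≤ t) (ht1 : t ≤ 1) :
    t * FErase p a0 a1 + (1 - t) * FErase p b0 b1 ≤
      FErase p (t * a0 + (1 - t) * b0) (t * a1 + (1 - t) * b1) :=
  condEnt_param_concave p hp0 hp1 (fun w => w.2.1) a0 a1 b0 b1 t
    ha0 ha0' ha1 ha1' hb0 hb0' hb1 hb1' ht0 ht1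

lemma GEnt_concave (p : ℝ) (hp0 : 0 < p) (hp1 : p < 1) (a0 a1 b0 b1 t : ℝ)
    (ha0 : 0 ≤ a0) (ha0' : a0 ≤ 1) (ha1 : 0 ≤ a1) (ha1' : a1 ≤ 1)
    (hb0 : 0 ≤ b0) (hb0' : b0 ≤ 1) (hb1 : 0 ≤ b1) (hb1' : b1 ≤ 1)
    (ht0 : 0 ≤ t) (ht1 : t ≤ 1) :
    t * GEnt p a0 a1 + (1 - t) * GEnt p b0 b1 ≤
      GEnt p (t * a0 + (1 - t) * b0) (t * a1 + (1 - t) * b1) :=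
  condEnt_param_concave p hp0 hp1 (fun w => w.1) a0 a1 b0 b1 t
    ha0 ha0' ha1 ha1' hb0 hb0' hb1 hb1' ht0 ht1

lemma FErase_diag (p : ℝ) (hp0 : 0 < p) (hp1 : p < 1) (a0 a1 : ℝ)
    (h00 : 0 ≤ a0) (h01 : a0 ≤ 1) (h10 : 0 ≤ a1) (h11 : a1 ≤ 1) :
    FErase p a0 a1 ≤ FErase p ((a0 + a1) / 2) ((a0 + a1) / 2) := by
  have hc := FErase_concave p hp0 hp1 a0 a1 a1 a0 (1/2)
    h00 h01 h10 h11 h10 h11 h00 h01 (by norm_num) (by norm_num)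
  have e0 : (1/2 : ℝ) * a0 + (1 - 1/2) * a1 = (a0 + a1) / 2 := by ring
  have e1 : (1/2 : ℝ) * a1 + (1 - 1/2) * a0 = (a0 + a1) / 2 := by ring
  rw [e0, e1, FErase_swap p a0 a1] at hc
  linarith

lemma GEnt_diag (p : ℝ) (hp0 : 0 < p) (hp1 : p < 1) (a0 a1 : ℝ)
    (h00 : 0 ≤ a0) (h01 : a0 ≤ 1) (h10 : 0 ≤ a1) (h11 : a1 ≤ 1) :
    GEnt p a0 a1 ≤ GEnt p ((a0 + a1) / 2) ((a0 + a1) / 2) := by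
  have hc := GEnt_concave p hp0 hp1 a0 a1 a1 a0 (1/2)
    h00 h01 h10 h11 h10 h11 h00 h01 (by norm_num) (by norm_num)
  have e0 : (1/2 : ℝ) * a0 + (1 - 1/2) * a1 = (a0 + a1) / 2 := by ring
  have e1 : (1/2 : ℝ) * a1 + (1 - 1/2) * a0 = (a0 + a1) / 2 := by ring
  rw [e0, e1, GEnt_swap p a0 a1] at hc
  linarith

lemma FErase_diag_mono (p : ℝ) (hp0 : 0 < p) (hp1 : p < 1) (m a : ℝ)
    (hm0 : 0 ≤ m) (hma : m ≤ a) (ha1 : a ≤ 1) :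
    FErase p m m ≤ FErase p a a :=
  condEnt_diag_mono p hp0 hp1 (fun w => w.2.1)
    (fun a0 a1 b0 b1 => condEnt_Y1X2_indep p a0 a1 b0 b1) m a hm0 hma ha1

lemma GEnt_diag_mono (p : ℝ) (hp0 : 0 < p) (hp1 : p < 1) (m a : ℝ)
    (hm0 : 0 ≤ m) (hma : m ≤ a) (ha1 : a ≤ 1) :
    GEnt p m m ≤ GEnt p a a :=
  condEnt_diag_mono p hp0 hp1 (fun w => w.1)
    (fun a0 a1 b0 b1 => condEnt_X1X2_indep p a0 a1 b0 b1) m a hm0 hma ha1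

lemma Leak_decomp (p a0 a1 : ℝ) :
    LeakErase p a0 a1 =
      HRV2 (jointErase p a0 a1) (fun w => w.2.1) - FErase p a0 a1 := by
  unfold LeakErase FErase MIrv2 condEntRV2
  ring

lemma WZ_decomp (p a0 a1 : ℝ) :
    WZErase p a0 a1 =
      condEntRV2 (jointErase p a0 a1) (fun w => w.1) (fun w => w.2.2.1) -
        GEnt p a0 a1 := by
  unfold WZErase GEnt condMIrv2 condEntRV2
  have hassoc : HRV2 (jointErase p a0 a1) (fun w => ((w.1, w.2.2.2), w.2.2.1)) =
      HRV2 (jointErase p a0 a1) (fun w => (w.1, (w.2.2.2, w.2.2.1))) :=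
    HRV2_codEquiv' (jointErase p a0 a1) (fun w => (w.1, (w.2.2.2, w.2.2.1)))
      (fun w => ((w.1, w.2.2.2), w.2.2.1))
      (Equiv.prodAssoc Bool (Option Bool) Bool).symm
      (fun ω => by simp [Equiv.prodAssoc])
  rw [hassoc]
  ring

end Final
/-- **Symmetric erasure mechanism is optimal.**  For `(X1,X2) ~ DSBS(p)` (so `X1` is
uniform) and `Y1 = X1 ⊕ Z1`, `Z1 ~ Ber(p)` independent of `X1`, over erasure-type
mechanisms with parameters `(α₀, α₁) ∈ [0,1]²` subject to `(α₀ + α₁)/2 ≤ D1`: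
`H(Y1 | U1, X2)` is concave and symmetric in `(α₀, α₁)` and is maximized subject to the
constraint at `α₀ = α₁`; consequently a single conditional distribution `P_{U1|X1}`
simultaneously minimizes the Wyner–Ziv rate `I(X1; U1 | X2)` and the leakage
`I(Y1; U1, X2)` over the feasible set. -/
theorem symmetric_erasure_mechanism_optimal
    (p D1 : ℝ) (hp0 : 0 < p) (hp1 : p < 1) (hD : 0 ≤ D1) :
    -- concavity of (α₀, α₁) ↦ H(Y1 | U1, X2) on [0,1]²
    (∀ a b : ℝ × ℝ, a ∈ Set.Icc (0,0) ((1:ℝ),(1:ℝ)) → b ∈ Set.Icc (0,0) ((1:ℝ),(1:ℝ)) →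
      ∀ t : ℝ, 0 ≤ t → t ≤ 1 →
        t * FErase p a.1 a.2 + (1 - t) * FErase p b.1 b.2 ≤
          FErase p (t * a.1 + (1 - t) * b.1) (t * a.2 + (1 - t) * b.2)) ∧
    -- symmetry under swapping α₀ and α₁
    (∀ a0 a1 : ℝ, a0 ∈ Set.Icc (0:ℝ) 1 → a1 ∈ Set.Icc (0:ℝ) 1 →
      FErase p a0 a1 = FErase p a1 a0) ∧
    -- subject to (α₀+α₁)/2 ≤ D1, the maximum is attained on the diagonal
    (∀ a0 a1 : ℝ, a0 ∈ Set.Icc (0:ℝ) 1 → a1 ∈ Set.Icc (0:ℝ) 1 → (a0 + a1) / 2 ≤ D1 →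
      FErase p a0 a1 ≤ FErase p ((a0 + a1) / 2) ((a0 + a1) / 2)) ∧
    -- consequently, one distribution minimizes both the Wyner–Ziv rate and the leakage
    (∃ a : ℝ, a ∈ Set.Icc (0:ℝ) 1 ∧ (a + a) / 2 ≤ D1 ∧
      ∀ b0 b1 : ℝ, b0 ∈ Set.Icc (0:ℝ) 1 → b1 ∈ Set.Icc (0:ℝ) 1 → (b0 + b1) / 2 ≤ D1 →
        WZErase p a a ≤ WZErase p b0 b1 ∧ LeakErase p a a ≤ LeakErase p b0 b1) := by
  refine ⟨?_, ?_, ?_, ?_⟩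
  · rintro ⟨a0, a1⟩ ⟨b0, b1⟩ ha hb t ht0 ht1
    have ha1 := ha.1
    have ha2 := ha.2
    have hb1 := hb.1
    have hb2 := hb.2
    rw [Prod.mk_le_mk] at ha1 ha2 hb1 hb2
    exact FErase_concave p hp0 hp1 a0 a1 b0 b1 t
      ha1.1 ha2.1 ha1.2 ha2.2 hb1.1 hb2.1 hb1.2 hb2.2 ht0 ht1
  · intro a0 a1 _ _
    exact (FErase_swap p a0 a1).symm
  · intro a0 a1 h0 h1 _
    exact FErase_diag p hp0 hp1 a0 a1 h0.1 h0.2 h1.1 h1.2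
  · refine ⟨min D1 1, ⟨le_min hD zero_le_one, min_le_right D1 1⟩, ?_, ?_⟩
    · have : (min D1 1 + min D1 1) / 2 = min D1 1 := by ring
      rw [this]
      exact min_le_left D1 1
    · intro b0 b1 h0 h1 hD1
      set a : ℝ := min D1 1 with ha
      have ha0 : 0 ≤ a := le_min hD zero_le_one
      have ha1' : a ≤ 1 := min_le_right D1 1
      set m : ℝ := (b0 + b1) / 2 with hm
      have hm0 : 0 ≤ m := by rw [hm]; linarith [h0.1, h1.1]
      have hm1 : m ≤ 1 := by rw [hm]; linarith [h0.2, h1.2]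
      have hma : m ≤ a := le_min hD1 hm1
      have hF : FErase p b0 b1 ≤ FErase p a a :=
        le_trans (FErase_diag p hp0 hp1 b0 b1 h0.1 h0.2 h1.1 h1.2)
          (FErase_diag_mono p hp0 hp1 m a hm0 hma ha1')
      have hG : GEnt p b0 b1 ≤ GEnt p a a :=
        le_trans (GEnt_diag p hp0 hp1 b0 b1 h0.1 h0.2 h1.1 h1.2)
          (GEnt_diag_mono p hp0 hp1 m a hm0 hma ha1')
      constructor
      · rw [WZ_decomp p a a, WZ_decomp p b0 b1,
          condEnt_X1X2_indep p a a b0 b1]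
        linarith
      · rw [Leak_decomp p a a, Leak_decomp p b0 b1,
          HRV2_Y1_indep p a a b0 b1]
        linarith

end
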